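/- Let H be a complex Hilbert space, A a continuous linear selfadjoint operator on H, and μ ∈ ℂ such that A − μ and A − \bar μ are invertible. Let φ, ψ ∈ H satisfy ((A − μ)⁻¹φ, ψ) ≠ 0, and define λ := μ + (φ, ψ)/((A − μ)⁻¹φ, ψ). Assume moreover ((A − λ)φ, ψ) ≠ 0, and define ω₂ := (A − λ)φ, ω₁ := (A − \bar λ)ψ, and α := −1/((A − λ)φ, ψ). Then the nonsymmetric rank-one perturbation Ã = A + α(·,ω₁)ω₂ has the dual pair of eigenvalues (μ, λ): Ãφ = λφ; Ãφ_μ = μφ_μ where φ_μ := (A − λ)(A − μ)⁻¹φ; Ã*ψ = \bar λ ψ; and Ã*ψ_{\bar μ} = \bar μ ψ_{\bar μ} where ψ_{\bar μ} := (A − \bar λ)(A − \bar μ)⁻¹ψ. -/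

import Mathlib

open ContinuousLinearMap

local notation "⟪" x ", " y "⟫" => @inner ℂ _ _ x y

/-- The nonsymmetric rank-one perturbation `Ã = A + α(·,ω₁)ω₂`. -/
noncomputable def rankOnePert {H : Type*} [NormedAddCommGroup H] [InnerProductSpace ℂ H]
    (A : H →L[ℂ] H) (α : ℂ) (ω₁ ω₂ : H) : H →L[ℂ] H :=
  A + α • (innerSL ℂ ω₁).smulRight ω₂

/-- Theorem 7 of the paper (regular-vector analogue): construction of an operator with a
prescribed dual pair of eigenvalues `(μ, λ)`, where
`λ = μ + (φ, ψ)/((A - μ)⁻¹φ, ψ)`, `ω₂ = (A - λ)φ`, `ω₁ = (A - λ̄)ψ`,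
`α = -1/((A - λ)φ, ψ)`. -/
theorem dual_pair_construction {H : Type*} [NormedAddCommGroup H] [InnerProductSpace ℂ H]
    [CompleteSpace H] (A : H →L[ℂ] H) (hA : IsSelfAdjoint A) (μ : ℂ)
    (Rμ : H →L[ℂ] H) (hRμ1 : (A - μ • 1) ∘L Rμ = 1) (hRμ2 : Rμ ∘L (A - μ • 1) = 1)
    (Sμ : H →L[ℂ] H)
    (hSμ1 : (A - (starRingEnd ℂ) μ • 1) ∘L Sμ = 1)
    (hSμ2 : Sμ ∘L (A - (starRingEnd ℂ) μ • 1) = 1)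
    (φ ψ : H) (h1 : ⟪ψ, Rμ φ⟫ ≠ 0)
    (lam : ℂ) (hlam : lam = μ + ⟪ψ, φ⟫ / ⟪ψ, Rμ φ⟫)
    (h2 : ⟪ψ, (A - lam • 1) φ⟫ ≠ 0)
    (α : ℂ) (hα : α = -(⟪ψ, (A - lam • 1) φ⟫)⁻¹)
    (ω₁ ω₂ : H) (hω₁ : ω₁ = (A - (starRingEnd ℂ) lam • 1) ψ) (hω₂ : ω₂ = (A - lam • 1) φ) :
    rankOnePert A α ω₁ ω₂ φ = lam • φ ∧
    rankOnePert A α ω₁ ω₂ ((A - lam • 1) (Rμ φ)) = μ • (A - lam • 1) (Rμ φ) ∧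
    (ContinuousLinearMap.adjoint (rankOnePert A α ω₁ ω₂)) ψ = (starRingEnd ℂ) lam • ψ ∧
    (ContinuousLinearMap.adjoint (rankOnePert A α ω₁ ω₂))
        ((A - (starRingEnd ℂ) lam • 1) (Sμ ψ))
      = (starRingEnd ℂ) μ • (A - (starRingEnd ℂ) lam • 1) (Sμ ψ) := by
  simp only [ContinuousLinearMap.sub_apply, ContinuousLinearMap.smul_apply,
    ContinuousLinearMap.one_apply] at h2 hα hω₁ hω₂ ⊢
  -- selfadjointness pointwise
  have hAi : ∀ x y : H, ⟪A x, y⟫ = ⟪x, A y⟫ := fun x y => by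
    conv_lhs => rw [← ContinuousLinearMap.isSelfAdjoint_iff'.mp hA]
    exact ContinuousLinearMap.adjoint_inner_left A y x
  -- moving `A - c̄` across the inner product
  have hmove : ∀ (c : ℂ) (x y : H),
      ⟪A x - (starRingEnd ℂ) c • x, y⟫ = ⟪x, A y - c • y⟫ := by
    intro c x y
    simp [inner_sub_left, inner_sub_right, inner_smul_left, inner_smul_right, hAi]
    ring
  -- application of the perturbation
  have hpert : ∀ x, rankOnePert A α ω₁ ω₂ x = A x + (α * ⟪ω₁, x⟫) • ω₂ := fun x => by
    simp [rankOnePert, smul_smul]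
  -- resolvent identities, pointwise
  have hR1 : ∀ x, A (Rμ x) - μ • Rμ x = x := fun x => by
    have := ContinuousLinearMap.ext_iff.mp hRμ1 x; simpa using this
  have hR2 : ∀ x, Rμ (A x) - μ • Rμ x = x := fun x => by
    have := ContinuousLinearMap.ext_iff.mp hRμ2 x; simpa using this
  have hS1 : ∀ x, A (Sμ x) - (starRingEnd ℂ) μ • Sμ x = x := fun x => by
    have := ContinuousLinearMap.ext_iff.mp hSμ1 x; simpa using this
  have hcomm : ∀ x, Rμ (A x) = A (Rμ x) := fun x => by
    have h1' := hR1 x; have h2' := hR2 x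
    have : A (Rμ x) - μ • Rμ x = Rμ (A x) - μ • Rμ x := h1'.trans h2'.symm
    exact (sub_left_inj.mp this).symm
  -- Sμ is the adjoint of Rμ
  have hSadj : ∀ x y, ⟪Sμ x, y⟫ = ⟪x, Rμ y⟫ := fun x y => by
    calc ⟪Sμ x, y⟫ = ⟪Sμ x, A (Rμ y) - μ • Rμ y⟫ := by rw [hR1 y]
    _ = ⟪A (Sμ x) - (starRingEnd ℂ) μ • Sμ x, Rμ y⟫ := (hmove μ (Sμ x) (Rμ y)).symm
    _ = ⟪x, Rμ y⟫ := by rw [hS1 x]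
  set u := Rμ φ with hu
  set w := Sμ ψ with hw
  have hRφ : A u - μ • u = φ := hR1 φ
  have hSψ : A w - (starRingEnd ℂ) μ • w = ψ := hS1 ψ
  -- the key orthogonality relation
  have key : ⟪ψ, A u - lam • u⟫ = 0 := by
    have hexp : ⟪ψ, A u - lam • u⟫ = ⟪ψ, φ⟫ - (lam - μ) * ⟪ψ, u⟫ := by
      rw [← hRφ]
      simp only [inner_sub_right, inner_smul_right]
      ring
    rw [hexp, hlam]
    field_simp
    ring
  have hαc : α * ⟪ψ, A φ - lam • φ⟫ = -1 := by
    rw [hα]; field_simp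
  -- second power identity
  have hsq : A (A u - lam • u) - lam • (A u - lam • u)
      = (A φ - lam • φ) + (μ - lam) • (A u - lam • u) := by
    rw [← hRφ]
    simp only [map_sub, map_smul, smul_sub, smul_smul]
    module
  have key2 : ⟪ψ, A (A u - lam • u) - lam • (A u - lam • u)⟫ = ⟪ψ, A φ - lam • φ⟫ := by
    rw [hsq, inner_add_right, inner_smul_right, key]
    ring
  refine ⟨?_, ?_, ?_, ?_⟩
  · -- Ãφ = λφ
    have hco : α * ⟪ω₁, φ⟫ = -1 := by
      rw [hω₁, hmove]; exact hαc
    rw [hpert, hco, hω₂, neg_one_smul]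
    module
  · -- Ãφ_μ = μφ_μ
    have hco : α * ⟪ω₁, A u - lam • u⟫ = -1 := by
      rw [hω₁, hmove, key2]; exact hαc
    rw [hpert, hco, hω₂, neg_one_smul]
    have : A (A u - lam • u) - (A φ - lam • φ) = μ • (A u - lam • u) := by
      rw [← hRφ]
      simp only [map_sub, map_smul]
      module
    rw [sub_eq_iff_eq_add] at this
    rw [this]
    abel
  · -- Ã*ψ = λ̄ψ
    have hadj : ∀ x, ContinuousLinearMap.adjoint (rankOnePert A α ω₁ ω₂) x
        = A x + ((starRingEnd ℂ) α * ⟪ω₂, x⟫) • ω₁ := by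
      intro x
      apply ext_inner_left ℂ
      intro v
      rw [ContinuousLinearMap.adjoint_inner_right, hpert]
      simp only [inner_add_left, inner_add_right, inner_smul_left, inner_smul_right,
        map_mul, inner_conj_symm, hAi]
      ring
    rw [hadj]
    have hco : (starRingEnd ℂ) α * ⟪ω₂, ψ⟫ = -1 := by
      have : ⟪ω₂, ψ⟫ = (starRingEnd ℂ) ⟪ψ, A φ - lam • φ⟫ := by
        rw [hω₂, inner_conj_symm]
      rw [this, ← map_mul, hαc]
      simp
    rw [hco, hω₁, neg_one_smul]
    module
  · -- Ã*ψ_μ̄ = μ̄ψ_μ̄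
    have hadj : ∀ x, ContinuousLinearMap.adjoint (rankOnePert A α ω₁ ω₂) x
        = A x + ((starRingEnd ℂ) α * ⟪ω₂, x⟫) • ω₁ := by
      intro x
      apply ext_inner_left ℂ
      intro v
      rw [ContinuousLinearMap.adjoint_inner_right, hpert]
      simp only [inner_add_left, inner_add_right, inner_smul_left, inner_smul_right,
        map_mul, inner_conj_symm, hAi]
      ring
    rw [hadj]
    have hRz : Rμ (A (A φ - lam • φ) - lam • (A φ - lam • φ))
        = A (A u - lam • u) - lam • (A u - lam • u) := by
      simp only [map_sub, map_smul, hcomm, hu]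
    have hco : (starRingEnd ℂ) α * ⟪ω₂, A w - (starRingEnd ℂ) lam • w⟫ = -1 := by
      have h3 : ⟪A w - (starRingEnd ℂ) lam • w, ω₂⟫ = ⟪ψ, A φ - lam • φ⟫ := by
        rw [hω₂, hmove, hw, hSadj, hRz, key2]
      have : ⟪ω₂, A w - (starRingEnd ℂ) lam • w⟫
          = (starRingEnd ℂ) ⟪ψ, A φ - lam • φ⟫ := by
        rw [← inner_conj_symm, h3]
      rw [this, ← map_mul, hαc]
      simp
    rw [hco, hω₁, neg_one_smul]
    have : A (A w - (starRingEnd ℂ) lam • w) - (A ψ - (starRingEnd ℂ) lam • ψ)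
        = (starRingEnd ℂ) μ • (A w - (starRingEnd ℂ) lam • w) := by
      rw [← hSψ]
      simp only [map_sub, map_smul]
      module
    rw [sub_eq_iff_eq_add] at this
    rw [this]
    abel
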